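/- Let L ∈ ℝ^{n×n} be the graph Laplacian of a strongly connected weighted directed graph on n nodes, let w be a vector with all entries strictly positive satisfying wᵀL = 0, and set W = diag(w). Let G = diag(g_1,…,g_n) with g_i ≥ 0 for all i and g_i > 0 for at least one i. Then the symmetric matrix W(L+G) + (L+G)ᵀW is positive definite. -/

import Mathlib

open Matrix Finset

lemma sum_erase_swap {n : ℕ} (F : Fin n → Fin n → ℝ) :
    ∑ i, ∑ j ∈ Finset.univ.erase i, F i j = ∑ j, ∑ i ∈ Finset.univ.erase j, F i j := by
  rw [Finset.sum_comm' (s := Finset.univ) (t := fun i => Finset.univ.erase i)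
    (t' := Finset.univ) (s' := fun j => Finset.univ.erase j)]
  intro i j
  simp [ne_comm, eq_comm]

theorem pinned_laplacian_W_posDef
    (n : ℕ) (a : Fin n → Fin n → ℝ) (L : Matrix (Fin n) (Fin n) ℝ)
    (hnn : ∀ i j, i ≠ j → 0 ≤ a i j)
    (hdiag : ∀ i, L i i = ∑ j ∈ Finset.univ.erase i, a i j)
    (hoff : ∀ i j, i ≠ j → L i j = -a i j)
    (hsc : ∀ i j : Fin n, i ≠ j → Relation.TransGen (fun u v => 0 < a u v) i j)
    (w : Fin n → ℝ) (hw : ∀ i, 0 < w i) (hwL : Matrix.vecMul w L = 0)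
    (g : Fin n → ℝ) (hg : ∀ i, 0 ≤ g i) (hg' : ∃ i, 0 < g i) :
    (Matrix.diagonal w * (L + Matrix.diagonal g)
        + (L + Matrix.diagonal g)ᵀ * Matrix.diagonal w).PosDef := by
  set A := L + Matrix.diagonal g with hA
  set M := Matrix.diagonal w * A + Aᵀ * Matrix.diagonal w with hM
  -- column sum identity from wᵀL = 0
  have hcol : ∀ j, ∑ i ∈ Finset.univ.erase j, w i * a i j = w j * L j j := by
    intro j
    have h0 : ∑ i, w i * L i j = 0 := by
      have := congrFun hwL j
      simpa [Matrix.vecMul, dotProduct] using this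
    have h1 : ∑ i ∈ Finset.univ.erase j, w i * L i j + w j * L j j = ∑ i, w i * L i j :=
      Finset.sum_erase_add _ _ (Finset.mem_univ j)
    have h2 : ∑ i ∈ Finset.univ.erase j, w i * L i j
        = -∑ i ∈ Finset.univ.erase j, w i * a i j := by
      rw [← Finset.sum_neg_distrib]
      refine Finset.sum_congr rfl fun i hi => ?_
      rw [hoff i j (Finset.ne_of_mem_erase hi)]; ring
    rw [h2, h0] at h1
    linarith
  rw [Matrix.posDef_iff_dotProduct_mulVec]
  constructor
  · -- Hermitian
    have : Mᵀ = M := by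
      rw [hM, Matrix.transpose_add, Matrix.transpose_mul, Matrix.transpose_mul,
        Matrix.transpose_transpose, Matrix.diagonal_transpose, add_comm]
    rw [Matrix.IsHermitian, Matrix.conjTranspose_eq_transpose_of_trivial, this]
  · intro x hx
    -- quadratic form identity
    have hQ : dotProduct (star x) (M *ᵥ x)
        = ∑ i, 2 * (w i * g i * x i ^ 2)
          + ∑ i, ∑ j ∈ Finset.univ.erase i, w i * a i j * (x i - x j) ^ 2 := by
      have hstar : star x = x := rfl
      have hQ1 : dotProduct (star x) (M *ᵥ x)
          = 2 * ∑ i, ∑ j, w i * A i j * x i * x j := by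
        rw [hstar, hM, Matrix.add_mulVec, dotProduct_add]
        have hsym : dotProduct x ((Aᵀ * Matrix.diagonal w) *ᵥ x)
            = dotProduct x ((Matrix.diagonal w * A) *ᵥ x) := by
          rw [Matrix.dotProduct_mulVec, ← Matrix.mulVec_transpose,
            Matrix.transpose_mul, Matrix.transpose_transpose, Matrix.diagonal_transpose,
            dotProduct_comm]
        rw [hsym, ← two_mul]
        congr 1
        simp only [dotProduct, Matrix.mulVec, Finset.mul_sum]
        refine Finset.sum_congr rfl fun i _ => Finset.sum_congr rfl fun j _ => ?_
        rw [Matrix.diagonal_mul]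
        ring
      -- split each inner sum at j = i
      have key : ∀ i, ∑ j, w i * A i j * x i * x j
          = w i * g i * x i ^ 2
            + ∑ j ∈ Finset.univ.erase i, w i * a i j * (x i ^ 2 - x i * x j) := by
        intro i
        rw [← Finset.sum_erase_add _ _ (Finset.mem_univ i)]
        have hAii : A i i = L i i + g i := by
          simp [hA, Matrix.add_apply]
        have hsum : ∑ j ∈ Finset.univ.erase i, w i * A i j * x i * x j
            = ∑ j ∈ Finset.univ.erase i, (- (w i * a i j * x i * x j)) := by
          refine Finset.sum_congr rfl fun j hj => ?_
          have hij : i ≠ j := (Finset.ne_of_mem_erase hj).symm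
          have : A i j = -a i j := by
            simp [hA, Matrix.add_apply, hoff i j hij, Matrix.diagonal_apply_ne _ hij]
          rw [this]; ring
        rw [hsum, hAii, hdiag i]
        have : ∑ j ∈ Finset.univ.erase i, w i * a i j * (x i ^ 2 - x i * x j)
            = ∑ j ∈ Finset.univ.erase i, (-(w i * a i j * x i * x j) + w i * a i j * x i * x i) := by
          refine Finset.sum_congr rfl fun j _ => ?_; ring
        rw [this, Finset.sum_add_distrib]
        have h2 : ∑ j ∈ Finset.univ.erase i, w i * a i j * x i * x i
            = w i * (∑ j ∈ Finset.univ.erase i, a i j) * (x i * x i) := by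
          rw [Finset.mul_sum, Finset.sum_mul]
          exact Finset.sum_congr rfl fun j _ => by ring
        rw [h2]
        ring
      have hD : 2 * ∑ i, ∑ j ∈ Finset.univ.erase i, w i * a i j * (x i ^ 2 - x i * x j)
          = ∑ i, ∑ j ∈ Finset.univ.erase i, w i * a i j * (x i - x j) ^ 2
            + ∑ i, ∑ j ∈ Finset.univ.erase i, w i * a i j * (x i ^ 2 - x j ^ 2) := by
        rw [Finset.mul_sum, ← Finset.sum_add_distrib]
        refine Finset.sum_congr rfl fun i _ => ?_
        rw [Finset.mul_sum, ← Finset.sum_add_distrib]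
        exact Finset.sum_congr rfl fun j _ => by ring
      have hT : ∑ i, ∑ j ∈ Finset.univ.erase i, w i * a i j * (x i ^ 2 - x j ^ 2) = 0 := by
        have hsplit : ∑ i, ∑ j ∈ Finset.univ.erase i, w i * a i j * (x i ^ 2 - x j ^ 2)
            = ∑ i, ∑ j ∈ Finset.univ.erase i, w i * a i j * x i ^ 2
              - ∑ i, ∑ j ∈ Finset.univ.erase i, w i * a i j * x j ^ 2 := by
          rw [← Finset.sum_sub_distrib]
          refine Finset.sum_congr rfl fun i _ => ?_
          rw [← Finset.sum_sub_distrib]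
          exact Finset.sum_congr rfl fun j _ => by ring
        have hswap : ∑ i, ∑ j ∈ Finset.univ.erase i, w i * a i j * x j ^ 2
            = ∑ i, ∑ j ∈ Finset.univ.erase i, w i * a i j * x i ^ 2 := by
          rw [sum_erase_swap (fun i j => w i * a i j * x j ^ 2)]
          refine Finset.sum_congr rfl fun j _ => ?_
          have : ∑ i ∈ Finset.univ.erase j, w i * a i j * x j ^ 2
              = (∑ i ∈ Finset.univ.erase j, w i * a i j) * x j ^ 2 := by
            rw [Finset.sum_mul]
          rw [this, hcol j, hdiag j, Finset.mul_sum, Finset.sum_mul]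
        rw [hsplit, hswap, sub_self]
      rw [hQ1,
        show (∑ i, ∑ j, w i * A i j * x i * x j)
            = ∑ i, (w i * g i * x i ^ 2
              + ∑ j ∈ Finset.univ.erase i, w i * a i j * (x i ^ 2 - x i * x j))
          from Finset.sum_congr rfl fun i _ => key i,
        Finset.sum_add_distrib, mul_add, hD, hT, add_zero, Finset.mul_sum]
    -- positivity
    rw [hQ]
    have hS1nonneg : ∀ i ∈ Finset.univ, (0:ℝ) ≤ 2 * (w i * g i * x i ^ 2) := fun i _ =>
      mul_nonneg (by norm_num) (mul_nonneg (mul_nonneg (hw i).le (hg i)) (sq_nonneg _))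
    have hS2term : ∀ i, ∀ j ∈ Finset.univ.erase i, (0:ℝ) ≤ w i * a i j * (x i - x j) ^ 2 :=
      fun i j hj => mul_nonneg (mul_nonneg (hw i).le
        (hnn i j (Finset.ne_of_mem_erase hj).symm)) (sq_nonneg _)
    have hS2nonneg : ∀ i ∈ Finset.univ,
        (0:ℝ) ≤ ∑ j ∈ Finset.univ.erase i, w i * a i j * (x i - x j) ^ 2 := fun i _ =>
      Finset.sum_nonneg (hS2term i)
    by_contra hle
    push_neg at hle
    have hS1 : ∑ i, 2 * (w i * g i * x i ^ 2) = 0 := by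
      have := Finset.sum_nonneg hS2nonneg
      have := Finset.sum_nonneg hS1nonneg
      linarith
    have hS2 : ∑ i, ∑ j ∈ Finset.univ.erase i, w i * a i j * (x i - x j) ^ 2 = 0 := by
      have := Finset.sum_nonneg hS2nonneg
      have := Finset.sum_nonneg hS1nonneg
      linarith
    have hz1 : ∀ i, 2 * (w i * g i * x i ^ 2) = 0 := fun i =>
      (Finset.sum_eq_zero_iff_of_nonneg hS1nonneg).mp hS1 i (Finset.mem_univ i)
    have hz2 : ∀ i, ∀ j ∈ Finset.univ.erase i, w i * a i j * (x i - x j) ^ 2 = 0 := by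
      intro i
      exact (Finset.sum_eq_zero_iff_of_nonneg (hS2term i)).mp
        ((Finset.sum_eq_zero_iff_of_nonneg hS2nonneg).mp hS2 i (Finset.mem_univ i))
    have hEq : ∀ u v, 0 < a u v → x u = x v := by
      intro u v huv
      by_cases h : u = v
      · rw [h]
      · have hv : v ∈ Finset.univ.erase u := Finset.mem_erase.mpr ⟨fun hh => h hh.symm, Finset.mem_univ v⟩
        have := hz2 u v hv
        have hsq : (x u - x v) ^ 2 = 0 := by
          rcases mul_eq_zero.mp this with h' | h'
          · rcases mul_eq_zero.mp h' with h'' | h''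
            · exact absurd h'' (hw u).ne'
            · exact absurd h'' huv.ne'
          · exact h'
        have := pow_eq_zero_iff (n := 2) (by norm_num) |>.mp hsq
        linarith [sub_eq_zero.mp this]
    have hchain : ∀ u v, Relation.TransGen (fun p q => 0 < a p q) u v → x u = x v := by
      intro u v h
      induction h with
      | single h => exact hEq _ _ h
      | tail _ h ih => exact ih.trans (hEq _ _ h)
    obtain ⟨i0, hi0⟩ := hg'
    have hxi0 : x i0 = 0 := by
      by_contra hx0
      have hpos : 0 < x i0 ^ 2 := by positivity
      have : 0 < 2 * (w i0 * g i0 * x i0 ^ 2) := by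
        have := hw i0
        positivity
      rw [hz1 i0] at this
      exact lt_irrefl 0 this
    obtain ⟨k, hk⟩ := Function.ne_iff.mp hx
    by_cases hki : k = i0
    · exact hk (by rw [hki, hxi0]; rfl)
    · have := hchain k i0 (hsc k i0 hki)
      rw [hxi0] at this
      exact hk this
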